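/- Let f : ℝⁿ → ℝ be a convex function, x₀ ∈ ℝⁿ, λ ≥ 0, and let v be a standard Gaussian vector on ℝⁿ. For σ > 0 let prox_f(x₀+σv, σλ) be the unique minimizer over x of (1/2)‖(x₀+σv) − x‖₂² + σλ f(x). Then sup_{σ>0} E[‖prox_f(x₀+σv, σλ) − x₀‖₂²]/σ² = D(λ∂f(x₀)), and the supremum is achieved in the limit σ → 0, i.e. lim_{σ→0} E[‖prox_f(x₀+σv, σλ) − x₀‖₂²]/σ² = D(λ∂f(x₀)). -/

import Mathlib

open MeasureTheory ProbabilityTheory Filter Topology Metric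
open scoped RealInnerProductSpace ENNReal Pointwise

noncomputable section

/-- Standard Gaussian measure on `ℝⁿ` (mean zero, identity covariance). -/
def stdGaussian (n : ℕ) : Measure (EuclideanSpace ℝ (Fin n)) :=
  Measure.map (⇑(EuclideanSpace.equiv (Fin n) ℝ).symm)
    (Measure.pi fun _ : Fin n => gaussianReal 0 1)

/-- `D(K)`: mean squared distance of a standard Gaussian vector to `K`. -/
def msd (n : ℕ) (K : Set (EuclideanSpace ℝ (Fin n))) : ℝ :=
  ∫ g, (Metric.infDist g K) ^ 2 ∂(stdGaussian n)

variable {E : Type*} [NormedAddCommGroup E] [InnerProductSpace ℝ E]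

/-- Subdifferential of `f` at `x₀`. -/
def subdiff (f : E → ℝ) (x₀ : E) : Set E :=
  {s | ∀ x, f x₀ + ⟪s, x - x₀⟫ ≤ f x}

/-- Cone generated by a set: `{c • x : c ≥ 0, x ∈ A}`. -/
def coneOf (A : Set E) : Set E :=
  {y | ∃ c : ℝ, 0 ≤ c ∧ ∃ x ∈ A, y = c • x}

/-- Set of feasible directions of `C` at `x₀`. -/
def feasible (C : Set E) (x₀ : E) : Set E := {z | x₀ + z ∈ C}

/-- Tangent cone of `C` at `x₀`: the closure of the cone of feasible directions. -/
def tangentConeOf (C : Set E) (x₀ : E) : Set E := closure (coneOf (feasible C x₀))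

/-- Polar cone of a set `K`. -/
def polarCone (K : Set E) : Set E := {v | ∀ x ∈ K, ⟪v, x⟫ ≤ 0}

open Classical in
/-- Metric projection onto `K` (the unique nearest point when `K` is nonempty,
closed and convex). -/
def projSet (K : Set E) (x : E) : E :=
  if h : ∃ y ∈ K, dist x y = Metric.infDist x K then h.choose else x

/-- Matrix-vector multiplication as a map between Euclidean spaces. -/
def matVec {m n : ℕ} (A : Matrix (Fin m) (Fin n) ℝ) (x : EuclideanSpace ℝ (Fin n)) :
    EuclideanSpace ℝ (Fin m) :=
  (EuclideanSpace.equiv (Fin m) ℝ).symm (A.mulVec (EuclideanSpace.equiv (Fin n) ℝ x))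

/-- Statistical dimension of `K`: `E ‖Proj(g,K)‖²` for standard Gaussian `g`. -/
def statDim (n : ℕ) (K : Set (EuclideanSpace ℝ (Fin n))) : ℝ :=
  ∫ g, ‖projSet K g‖ ^ 2 ∂(stdGaussian n)

end


noncomputable section

namespace Aux

variable {E : Type*} [NormedAddCommGroup E] [InnerProductSpace ℝ E]
variable {f : E → ℝ} {x₀ : E}

/-- difference quotient -/
def slopeQ (f : E → ℝ) (x₀ d : E) (t : ℝ) : ℝ := (f (x₀ + t • d) - f x₀) / t

lemma slopeQ_monoOn (hf : ConvexOn ℝ Set.univ f) (d : E) :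
    MonotoneOn (slopeQ f x₀ d) (Set.Ioi 0) := by
  rintro s hs t ht hst
  have hs0 : (0:ℝ) < s := hs
  have ht0 : (0:ℝ) < t := ht
  have hab : s/t + (1 - s/t) = 1 := by ring
  have key := hf.2 (Set.mem_univ (x₀ + t • d)) (Set.mem_univ x₀)
    (div_nonneg hs0.le ht0.le) (by
      have : s/t ≤ 1 := (div_le_one ht0).2 hst
      linarith) hab
  have harg : (s/t) • (x₀ + t • d) + (1 - s/t) • x₀ = x₀ + s • d := by
    rw [smul_add, smul_smul, div_mul_cancel₀ _ ht0.ne']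
    module
  rw [harg] at key
  simp only [smul_eq_mul] at key
  have key' := mul_le_mul_of_nonneg_left key ht0.le
  have key'' : t * f (x₀ + s • d) ≤ s * f (x₀ + t • d) + (t - s) * f x₀ := by
    calc t * f (x₀ + s • d) ≤ t * (s / t * f (x₀ + t • d) + (1 - s / t) * f x₀) := key'
      _ = s * f (x₀ + t • d) + (t - s) * f x₀ := by field_simp
  simp only [slopeQ]
  rw [div_le_div_iff₀ hs0 ht0]
  nlinarith [key'']

lemma subdiff_le_slopeQ {s : E} (hs : s ∈ subdiff f x₀) {d : E} {t : ℝ} (ht : 0 < t) :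
    ⟪s, d⟫ ≤ slopeQ f x₀ d t := by
  have h := hs (x₀ + t • d)
  rw [add_sub_cancel_left, real_inner_smul_right] at h
  rw [slopeQ, le_div_iff₀ ht]
  linarith

lemma slopeQ_neg_le (hf : ConvexOn ℝ Set.univ f) (d : E) {t : ℝ} (ht : 0 < t) :
    - slopeQ f x₀ (-d) t ≤ slopeQ f x₀ d t := by
  have hab : (1/2 : ℝ) + 1/2 = 1 := by ring
  have key := hf.2 (Set.mem_univ (x₀ + t • d)) (Set.mem_univ (x₀ + t • (-d)))
    (by norm_num) (by norm_num) hab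
  have harg : (1/2 : ℝ) • (x₀ + t • d) + (1/2 : ℝ) • (x₀ + t • (-d)) = x₀ := by module
  rw [harg] at key
  simp only [smul_eq_mul] at key
  simp only [slopeQ, ← neg_div]
  rw [div_le_div_iff_of_pos_right ht]
  linarith

lemma slopeQ_lower (hf : ConvexOn ℝ Set.univ f) (d : E) {t : ℝ} (ht : 0 < t) :
    f x₀ - f (x₀ + (-d)) ≤ slopeQ f x₀ d t := by
  have h1 : f x₀ - f (x₀ + (-d)) = - slopeQ f x₀ (-d) 1 := by
    simp [slopeQ]
  rw [h1]
  rcases le_total t 1 with h | h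
  · calc - slopeQ f x₀ (-d) 1 ≤ - slopeQ f x₀ (-d) t := by
          have := slopeQ_monoOn (x₀ := x₀) hf (-d) (Set.mem_Ioi.2 ht)
            (Set.mem_Ioi.2 one_pos) h
          linarith
        _ ≤ slopeQ f x₀ d t := slopeQ_neg_le hf d ht
  · calc - slopeQ f x₀ (-d) 1 ≤ slopeQ f x₀ d 1 := slopeQ_neg_le hf d one_pos
        _ ≤ slopeQ f x₀ d t :=
          slopeQ_monoOn (x₀ := x₀) hf d (Set.mem_Ioi.2 one_pos) (Set.mem_Ioi.2 ht) h

lemma bddBelow_slopeQ (hf : ConvexOn ℝ Set.univ f) (d : E) :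
    BddBelow (slopeQ f x₀ d '' Set.Ioi 0) := by
  refine ⟨f x₀ - f (x₀ + (-d)), ?_⟩
  rintro b ⟨t, ht, rfl⟩
  exact slopeQ_lower hf d ht

/-- directional derivative -/
def dirDeriv (f : E → ℝ) (x₀ d : E) : ℝ := sInf (slopeQ f x₀ d '' Set.Ioi 0)

lemma dirDeriv_le_slopeQ (hf : ConvexOn ℝ Set.univ f) (d : E) {t : ℝ} (ht : 0 < t) :
    dirDeriv f x₀ d ≤ slopeQ f x₀ d t :=
  csInf_le (bddBelow_slopeQ hf d) ⟨t, ht, rfl⟩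

lemma tendsto_slopeQ (hf : ConvexOn ℝ Set.univ f) (d : E) :
    Tendsto (slopeQ f x₀ d) (𝓝[>] (0:ℝ)) (𝓝 (dirDeriv f x₀ d)) :=
  MonotoneOn.tendsto_nhdsGT (slopeQ_monoOn hf d) (bddBelow_slopeQ hf d)

lemma dirDeriv_zero (hf : ConvexOn ℝ Set.univ f) : dirDeriv f x₀ (0:E) = 0 := by
  have : slopeQ f x₀ (0:E) '' Set.Ioi 0 = {0} := by
    apply Set.eq_singleton_iff_nonempty_unique_mem.2
    constructor
    · exact ⟨slopeQ f x₀ 0 1, 1, Set.mem_Ioi.2 one_pos, rfl⟩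
    · rintro b ⟨t, ht, rfl⟩
      simp [slopeQ]
  rw [dirDeriv, this, csInf_singleton]

lemma slopeQ_smul (d : E) {c t : ℝ} (hc : 0 < c) (ht : 0 < t) :
    slopeQ f x₀ (c • d) t = c * slopeQ f x₀ d (t * c) := by
  simp only [slopeQ, smul_smul]
  rw [mul_comm t c, mul_div_assoc']
  exact (mul_div_mul_left _ _ hc.ne').symm

lemma dirDeriv_smul (hf : ConvexOn ℝ Set.univ f) (d : E) {c : ℝ} (hc : 0 < c) :
    dirDeriv f x₀ (c • d) = c * dirDeriv f x₀ d := by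
  have himg : slopeQ f x₀ (c • d) '' Set.Ioi 0 = c • (slopeQ f x₀ d '' Set.Ioi 0) := by
    ext b
    simp only [Set.mem_image, Set.mem_smul_set, Set.mem_Ioi, smul_eq_mul]
    constructor
    · rintro ⟨t, ht, rfl⟩
      exact ⟨slopeQ f x₀ d (t*c), ⟨t*c, mul_pos ht hc, rfl⟩, (slopeQ_smul d hc ht).symm⟩
    · rintro ⟨-, ⟨u, hu, rfl⟩, rfl⟩
      refine ⟨u/c, div_pos hu hc, ?_⟩
      rw [slopeQ_smul d hc (div_pos hu hc), div_mul_cancel₀ _ hc.ne']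
  rw [dirDeriv, himg, Real.sInf_smul_of_nonneg hc.le, smul_eq_mul, dirDeriv]

lemma slopeQ_add_le (hf : ConvexOn ℝ Set.univ f) (d₁ d₂ : E) {t : ℝ} (ht : 0 < t) :
    slopeQ f x₀ (d₁ + d₂) t ≤ slopeQ f x₀ d₁ (2*t) + slopeQ f x₀ d₂ (2*t) := by
  have hab : (1/2 : ℝ) + 1/2 = 1 := by ring
  have key := hf.2 (Set.mem_univ (x₀ + (2*t) • d₁)) (Set.mem_univ (x₀ + (2*t) • d₂))
    (by norm_num) (by norm_num) hab
  have harg : (1/2 : ℝ) • (x₀ + (2*t) • d₁) + (1/2 : ℝ) • (x₀ + (2*t) • d₂)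
      = x₀ + t • (d₁ + d₂) := by
    match_scalars <;> ring
  rw [harg] at key
  simp only [smul_eq_mul] at key
  have key' := mul_le_mul_of_nonneg_left key (le_of_lt (by positivity : (0:ℝ) < 2*t))
  simp only [slopeQ]
  rw [← add_div, div_le_div_iff₀ ht (by positivity)]
  nlinarith [key']

lemma dirDeriv_add (hf : ConvexOn ℝ Set.univ f) (d₁ d₂ : E) :
    dirDeriv f x₀ (d₁ + d₂) ≤ dirDeriv f x₀ d₁ + dirDeriv f x₀ d₂ := by
  have key : ∀ t₁ ∈ Set.Ioi (0:ℝ), ∀ t₂ ∈ Set.Ioi (0:ℝ),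
      dirDeriv f x₀ (d₁ + d₂) ≤ slopeQ f x₀ d₁ t₁ + slopeQ f x₀ d₂ t₂ := by
    intro t₁ ht₁ t₂ ht₂
    set t := min t₁ t₂ / 2 with htdef
    have ht : 0 < t := by
      have := lt_min (Set.mem_Ioi.1 ht₁) (Set.mem_Ioi.1 ht₂)
      positivity
    have h2t₁ : 2 * t ≤ t₁ := by
      rw [htdef]; rw [mul_div_assoc']
      calc 2 * min t₁ t₂ / 2 = min t₁ t₂ := by ring
        _ ≤ t₁ := min_le_left _ _
    have h2t₂ : 2 * t ≤ t₂ := by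
      rw [htdef]; rw [mul_div_assoc']
      calc 2 * min t₁ t₂ / 2 = min t₁ t₂ := by ring
        _ ≤ t₂ := min_le_right _ _
    calc dirDeriv f x₀ (d₁ + d₂) ≤ slopeQ f x₀ (d₁ + d₂) t := dirDeriv_le_slopeQ hf _ ht
      _ ≤ slopeQ f x₀ d₁ (2*t) + slopeQ f x₀ d₂ (2*t) := slopeQ_add_le hf d₁ d₂ ht
      _ ≤ slopeQ f x₀ d₁ t₁ + slopeQ f x₀ d₂ t₂ := by
          gcongr
          · exact slopeQ_monoOn (x₀ := x₀) hf d₁ (Set.mem_Ioi.2 (by positivity))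
              ht₁ h2t₁
          · exact slopeQ_monoOn (x₀ := x₀) hf d₂ (Set.mem_Ioi.2 (by positivity))
              ht₂ h2t₂
  have h1 : ∀ t₁ ∈ Set.Ioi (0:ℝ),
      dirDeriv f x₀ (d₁ + d₂) - slopeQ f x₀ d₁ t₁ ≤ dirDeriv f x₀ d₂ := by
    intro t₁ ht₁
    refine le_csInf ⟨slopeQ f x₀ d₂ 1, ⟨1, Set.mem_Ioi.2 one_pos, rfl⟩⟩ ?_
    rintro b ⟨t₂, ht₂, rfl⟩
    linarith [key t₁ ht₁ t₂ ht₂]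
  have h2 : dirDeriv f x₀ (d₁ + d₂) - dirDeriv f x₀ d₂ ≤ dirDeriv f x₀ d₁ := by
    refine le_csInf ⟨slopeQ f x₀ d₁ 1, ⟨1, Set.mem_Ioi.2 one_pos, rfl⟩⟩ ?_
    rintro b ⟨t₁, ht₁, rfl⟩
    linarith [h1 t₁ ht₁]
  linarith

lemma subdiff_le_dirDeriv {s : E} (hs : s ∈ subdiff f x₀) (hf : ConvexOn ℝ Set.univ f) (d : E) :
    ⟪s, d⟫ ≤ dirDeriv f x₀ d := by
  refine le_csInf ⟨slopeQ f x₀ d 1, ⟨1, Set.mem_Ioi.2 one_pos, rfl⟩⟩ ?_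
  rintro b ⟨t, ht, rfl⟩
  exact subdiff_le_slopeQ hs ht

/-- Max formula (nonzero direction). -/
lemma exists_subgradient_ne [FiniteDimensional ℝ E] [CompleteSpace E]
    (hf : ConvexOn ℝ Set.univ f) (x₀ : E) {d : E} (hd : d ≠ 0) :
    ∃ s ∈ subdiff f x₀, ⟪s, d⟫ = dirDeriv f x₀ d := by
  set N : E → ℝ := dirDeriv f x₀ with hN
  have hH : ∀ c : ℝ, c • d = 0 → c • (N d) = 0 := by
    intro c hc
    rcases smul_eq_zero.1 hc with h | h
    · simp [h]
    · exact absurd h hd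
  set pm := LinearPMap.mkSpanSingleton' (R := ℝ) (σ := RingHom.id ℝ) d (N d) hH with hpm
  have hdom : ∀ z : pm.domain, pm z ≤ N z.1 := by
    rintro ⟨z, hz⟩
    have hz' : z ∈ Submodule.span ℝ {d} := hz
    obtain ⟨c, rfl⟩ := Submodule.mem_span_singleton.1 hz'
    rw [LinearPMap.mkSpanSingleton'_apply]
    rcases lt_trichotomy c 0 with h | h | h
    · have h2 : c • d + (-c) • d = 0 := by module
      have h1 := dirDeriv_add (x₀ := x₀) hf (c • d) ((-c) • d)
      rw [h2, dirDeriv_zero hf] at h1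
      have h3 : dirDeriv f x₀ ((-c) • d) = (-c) * dirDeriv f x₀ d :=
        dirDeriv_smul hf d (by linarith)
      simp only [hN, smul_eq_mul, RingHom.id_apply]
      nlinarith [h1, h3]
    · subst h
      simp [hN, dirDeriv_zero hf]
    · rw [hN, dirDeriv_smul hf d h, smul_eq_mul, RingHom.id_apply]
  obtain ⟨g, hg1, hg2⟩ := exists_extension_of_le_sublinear pm N
    (fun c hc x => dirDeriv_smul hf x hc) (dirDeriv_add hf) hdom
  set s : E := (InnerProductSpace.toDual ℝ E).symm (LinearMap.toContinuousLinearMap g) with hs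
  have hsg : ∀ x, ⟪s, x⟫ = g x := by
    intro x
    rw [hs, InnerProductSpace.toDual_symm_apply]
    rfl
  have hmem : s ∈ subdiff f x₀ := by
    intro x
    have h1 : ⟪s, x - x₀⟫ ≤ N (x - x₀) := (hsg (x - x₀)) ▸ hg2 (x - x₀)
    have h2 : N (x - x₀) ≤ slopeQ f x₀ (x - x₀) 1 := dirDeriv_le_slopeQ hf _ one_pos
    have h3 : slopeQ f x₀ (x - x₀) 1 = f x - f x₀ := by
      simp [slopeQ]
    linarith
  refine ⟨s, hmem, ?_⟩
  have hdmem : d ∈ pm.domain := by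
    rw [hpm, LinearPMap.domain_mkSpanSingleton]
    exact Submodule.mem_span_singleton_self d
  have h4 : g d = pm ⟨d, hdmem⟩ := hg1 ⟨d, hdmem⟩
  have h5 : pm ⟨d, hdmem⟩ = N d := by
    have : pm ⟨(1:ℝ) • d, by simpa using hdmem⟩ = (1:ℝ) • N d :=
      LinearPMap.mkSpanSingleton'_apply d (N d) hH 1 (by simpa using hdmem)
    simpa using this
  rw [hsg d, h4, h5]

/-- Max formula: existence of a subgradient attaining the directional derivative. -/
lemma exists_subgradient [FiniteDimensional ℝ E] [CompleteSpace E]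
    (hf : ConvexOn ℝ Set.univ f) (x₀ d : E) :
    ∃ s ∈ subdiff f x₀, ⟪s, d⟫ = dirDeriv f x₀ d := by
  by_cases hd : d = 0
  · subst hd
    rw [dirDeriv_zero hf]
    by_cases hE : ∃ e : E, e ≠ 0
    · obtain ⟨e, he⟩ := hE
      obtain ⟨s, hs, -⟩ := exists_subgradient_ne hf x₀ he
      exact ⟨s, hs, by simp⟩
    · push_neg at hE
      refine ⟨0, ?_, by simp⟩
      intro x
      have hx : x - x₀ = 0 := by rw [hE (x - x₀)]
      have : x = x₀ := by
        have := sub_eq_zero.1 hx; exact this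
      simp [this]
  · exact exists_subgradient_ne hf x₀ hd

lemma quad_id (a b : E) (t : ℝ) :
    ‖(1-t) • a + t • b‖^2 = (1-t)*‖a‖^2 + t*‖b‖^2 - t*(1-t)*‖a-b‖^2 := by
  have h1 := norm_add_sq_real ((1-t) • a) (t • b)
  have h2 := norm_sub_sq_real a b
  rw [real_inner_smul_left, real_inner_smul_right, norm_smul, norm_smul] at h1
  simp only [Real.norm_eq_abs, mul_pow, sq_abs] at h1
  nlinarith [h1, h2]

/-- strong convexity inequality at the minimizer -/
lemma strong_min (hf : ConvexOn ℝ Set.univ f) {y p : E} {τ : ℝ} (hτ : 0 ≤ τ)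
    (hp : IsMinOn (fun x => (1/2 : ℝ) * ‖y - x‖^2 + τ * f x) Set.univ p) (x : E) :
    (1/2 : ℝ) * ‖y - p‖^2 + τ * f p + (1/2) * ‖x - p‖^2 ≤ (1/2) * ‖y - x‖^2 + τ * f x := by
  set c := ‖x - p‖^2 with hc
  set D := ((1/2 : ℝ) * ‖y - x‖^2 + τ * f x) - ((1/2) * ‖y - p‖^2 + τ * f p) with hD
  have key : ∀ t ∈ Set.Ioo (0:ℝ) 1, (1/2)*(1-t)*c ≤ D := by
    rintro t ⟨ht0, ht1⟩
    have hz : y - (p + t • (x - p)) = (1-t) • (y-p) + t • (y-x) := by module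
    have hmin := isMinOn_iff.1 hp _ (Set.mem_univ (p + t • (x - p)))
    have hconv := hf.2 (Set.mem_univ p) (Set.mem_univ x)
      (by linarith : (0:ℝ) ≤ 1 - t) ht0.le (by ring)
    have hzz : (1-t) • p + t • x = p + t • (x-p) := by module
    rw [hzz] at hconv
    have hq := quad_id (y-p) (y-x) t
    have hab : (y-p) - (y-x) = x - p := by module
    rw [hab] at hq
    rw [hz] at hmin
    have hτf := mul_le_mul_of_nonneg_left hconv hτ
    simp only [smul_eq_mul] at hτf
    rw [hq] at hmin
    have h6 : t * ((1/2 : ℝ)*‖y-p‖^2 + τ * f p)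
        ≤ t * ((1/2)*‖y-x‖^2 + τ * f x - (1/2)*(1-t)*‖x-p‖^2) := by
      nlinarith [hmin, hτf]
    have h7 := le_of_mul_le_mul_left h6 ht0
    rw [hD, hc]
    linarith
  have hlim : Tendsto (fun t : ℝ => (1/2)*(1-t)*c) (𝓝[>] (0:ℝ)) (𝓝 ((1/2)*c)) := by
    have hcont : ContinuousAt (fun t : ℝ => (1/2)*(1-t)*c) 0 := by fun_prop
    have := hcont.continuousWithinAt (s := Set.Ioi (0:ℝ))
    simpa using this.tendsto
  have hev : ∀ᶠ t in 𝓝[>] (0:ℝ), (1/2)*(1-t)*c ≤ D := by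
    filter_upwards [Ioo_mem_nhdsGT_of_mem (Set.mem_Ico.2 ⟨le_refl (0:ℝ), one_pos⟩)] with t ht
    exact key t ht
  have := le_of_tendsto hlim hev
  rw [hD] at this
  linarith

end Aux

namespace Aux2
open Aux
variable {E : Type*} [NormedAddCommGroup E] [InnerProductSpace ℝ E]
variable {f : E → ℝ} {x₀ : E}

lemma key_ineq1 (hf : ConvexOn ℝ Set.univ f) {lam σ : ℝ} (hlam : 0 ≤ lam) (hσ : 0 < σ)
    {w p sstar : E} (hs : sstar ∈ subdiff f x₀)
    (hp : IsMinOn (fun x => (1/2 : ℝ) * ‖(x₀ + σ • w) - x‖^2 + σ * lam * f x) Set.univ p) :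
    ‖p - x₀‖ ≤ σ * ‖w - lam • sstar‖ := by
  have SC := strong_min hf (mul_nonneg hσ.le hlam) hp x₀
  set d := p - x₀ with hd
  have hyp : (x₀ + σ • w) - p = σ • w - d := by rw [hd]; abel
  have hyx : (x₀ + σ • w) - x₀ = σ • w := by abel
  have hxp : x₀ - p = -d := by rw [hd]; abel
  rw [hyp, hyx, hxp, norm_neg] at SC
  have hsub := hs p
  have hsub' : f x₀ + ⟪sstar, d⟫ ≤ f p := hsub
  have hτ : (0:ℝ) ≤ σ * lam := mul_nonneg hσ.le hlam
  have hsubτ := mul_le_mul_of_nonneg_left hsub' hτ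
  have hexp : ‖σ • w - d‖^2 = ‖σ • w‖^2 - 2*⟪σ • w, d⟫ + ‖d‖^2 := by
    rw [norm_sub_sq_real]; try ring
  rw [hexp] at SC
  have hkey : ‖d‖^2 ≤ σ * ⟪w - lam • sstar, d⟫ := by
    have h1 : ⟪σ • w, d⟫ = σ * ⟪w, d⟫ := real_inner_smul_left _ _ _
    have h2 : ⟪w - lam • sstar, d⟫ = ⟪w, d⟫ - lam * ⟪sstar, d⟫ := by
      rw [inner_sub_left, real_inner_smul_left]
    rw [h2]
    nlinarith [SC, hsubτ, h1]
  have hCS : ⟪w - lam • sstar, d⟫ ≤ ‖w - lam • sstar‖ * ‖d‖ := real_inner_le_norm _ _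
  rcases eq_or_lt_of_le (norm_nonneg d) with h0 | h0
  · rw [← h0]; positivity
  · have h3 : ‖d‖ * ‖d‖ ≤ (σ * ‖w - lam • sstar‖) * ‖d‖ := by
      nlinarith [hkey, hCS, hσ]
    exact le_of_mul_le_mul_right h3 h0

lemma key_ineq2 (hf : ConvexOn ℝ Set.univ f) {lam σ : ℝ} (hlam : 0 ≤ lam) (hσ : 0 < σ)
    {w p sstar : E} (hs : sstar ∈ subdiff f x₀)
    (hp : IsMinOn (fun x => (1/2 : ℝ) * ‖(x₀ + σ • w) - x‖^2 + σ * lam * f x) Set.univ p) :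
    (1/2 : ℝ) * ‖σ • (w - lam • sstar) - (p - x₀)‖^2
      ≤ σ * lam * (f (x₀ + σ • (w - lam • sstar)) - f x₀)
        - σ^2 * ⟪lam • sstar, w - lam • sstar⟫ := by
  set u := lam • sstar with hu
  set e := w - u with he
  have SC := strong_min hf (mul_nonneg hσ.le hlam) hp (x₀ + σ • e)
  set d := p - x₀ with hd
  have hyp : (x₀ + σ • w) - p = σ • w - d := by rw [hd]; abel
  have hyx : (x₀ + σ • w) - (x₀ + σ • e) = σ • u := by
    rw [he, smul_sub]; abel
  have hxp : (x₀ + σ • e) - p = σ • e - d := by rw [hd]; abel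
  rw [hyp, hyx, hxp] at SC
  have hsub' : f x₀ + ⟪sstar, d⟫ ≤ f p := hs p
  have hτ : (0:ℝ) ≤ σ * lam := mul_nonneg hσ.le hlam
  have hsubτ := mul_le_mul_of_nonneg_left hsub' hτ
  -- expansions
  have hexp1 : ‖σ • w - d‖^2 = σ^2*‖w‖^2 - 2*σ*⟪w, d⟫ + ‖d‖^2 := by
    rw [norm_sub_sq_real]
    simp only [norm_smul, Real.norm_eq_abs, mul_pow, sq_abs, real_inner_smul_left]
    ring
  have hexp2 : ‖σ • u‖^2 = σ^2*‖u‖^2 := by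
    simp only [norm_smul, Real.norm_eq_abs, mul_pow, sq_abs]
  -- positivity: ‖(σ•w-d) - σ•u‖² ≥ 0  gives the needed bound
  have hpos : (0:ℝ) ≤ ‖(σ • w - d) - σ • u‖^2 := sq_nonneg _
  have hexp3 : ‖(σ • w - d) - σ • u‖^2
      = ‖σ • w - d‖^2 - 2*⟪σ • w - d, σ • u⟫ + σ^2*‖u‖^2 := by
    rw [norm_sub_sq_real, hexp2]; try ring
  have hinner1 : ⟪σ • w - d, σ • u⟫ = σ^2*⟪w, u⟫ - σ*⟪d, u⟫ := by
    simp only [inner_sub_left, real_inner_smul_left, real_inner_smul_right]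
    ring
  -- σ * lam * ⟪sstar, d⟫ = σ * ⟪u, d⟫
  have hinner2 : σ * lam * ⟪sstar, d⟫ = σ * ⟪u, d⟫ := by
    rw [hu, real_inner_smul_left]; ring
  -- ⟪u, e⟫ = ⟪u, w⟫ - ‖u‖²
  have hinner3 : ⟪u, e⟫ = ⟪u, w⟫ - ‖u‖^2 := by
    rw [he, inner_sub_right, real_inner_self_eq_norm_sq]
  have hcomm1 : ⟪w, u⟫ = ⟪u, w⟫ := real_inner_comm _ _
  have hcomm2 : ⟪d, u⟫ = ⟪u, d⟫ := real_inner_comm _ _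
  nlinarith [SC, hsubτ, hpos, hexp1, hexp3, hinner1, hinner2, hinner3, hcomm1, hcomm2]

lemma prox_lipschitz (hf : ConvexOn ℝ Set.univ f) {lam σ : ℝ} (hlam : 0 ≤ lam) (hσ : 0 < σ)
    {w₁ w₂ p₁ p₂ : E}
    (hp₁ : IsMinOn (fun x => (1/2 : ℝ) * ‖(x₀ + σ • w₁) - x‖^2 + σ * lam * f x) Set.univ p₁)
    (hp₂ : IsMinOn (fun x => (1/2 : ℝ) * ‖(x₀ + σ • w₂) - x‖^2 + σ * lam * f x) Set.univ p₂) :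
    ‖p₁ - p₂‖ ≤ σ * ‖w₁ - w₂‖ := by
  have SC1 := strong_min hf (mul_nonneg hσ.le hlam) hp₁ p₂
  have SC2 := strong_min hf (mul_nonneg hσ.le hlam) hp₂ p₁
  set A := (x₀ + σ • w₁) - p₁ with hA
  set B := (x₀ + σ • w₂) - p₂ with hB
  set q := p₁ - p₂ with hq
  have e1 : (x₀ + σ • w₁) - p₂ = A + q := by rw [hA, hq]; abel
  have e2 : (x₀ + σ • w₂) - p₁ = B - q := by rw [hB, hq]; abel
  have e3 : p₂ - p₁ = -q := by rw [hq]; abel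
  rw [e1, e3, norm_neg] at SC1
  rw [e2] at SC2
  have hexp1 : ‖A + q‖^2 = ‖A‖^2 + 2*⟪A, q⟫ + ‖q‖^2 := by rw [norm_add_sq_real]; try ring
  have hexp2 : ‖B - q‖^2 = ‖B‖^2 - 2*⟪B, q⟫ + ‖q‖^2 := by rw [norm_sub_sq_real]; try ring
  have hAB : A - B = σ • (w₁ - w₂) - q := by rw [hA, hB, hq, smul_sub]; abel
  have hkey : ‖q‖^2 ≤ ⟪σ • (w₁ - w₂), q⟫ := by
    have h5 : ⟪A - B, q⟫ = ⟪A, q⟫ - ⟪B, q⟫ := inner_sub_left _ _ _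
    have h6 : ⟪σ • (w₁ - w₂) - q, q⟫ = ⟪σ • (w₁ - w₂), q⟫ - ‖q‖^2 := by
      rw [inner_sub_left, real_inner_self_eq_norm_sq]
    rw [hAB] at h5
    nlinarith [SC1, SC2, hexp1, hexp2, h5, h6]
  have hCS : ⟪σ • (w₁ - w₂), q⟫ ≤ σ * ‖w₁ - w₂‖ * ‖q‖ := by
    calc ⟪σ • (w₁ - w₂), q⟫ ≤ ‖σ • (w₁ - w₂)‖ * ‖q‖ := real_inner_le_norm _ _
      _ = σ * ‖w₁ - w₂‖ * ‖q‖ := by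
          rw [norm_smul, Real.norm_eq_abs, abs_of_pos hσ]
  rcases eq_or_lt_of_le (norm_nonneg q) with h0 | h0
  · rw [← h0]; positivity
  · have h3 : ‖q‖ * ‖q‖ ≤ (σ * ‖w₁ - w₂‖) * ‖q‖ := by nlinarith [hkey, hCS]
    exact le_of_mul_le_mul_right h3 h0

end Aux2


namespace AuxG

lemma map_eval_pi {n : ℕ} (μ : Measure ℝ) [IsProbabilityMeasure μ] (i : Fin n) :
    Measure.map (Function.eval i) (Measure.pi fun _ : Fin n => μ) = μ := by
  refine Measure.ext fun s hs => ?_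
  rw [Measure.map_apply (measurable_pi_apply i) hs]
  have hpre : Function.eval i ⁻¹' s
      = Set.pi Set.univ (Function.update (fun _ : Fin n => (Set.univ : Set ℝ)) i s) := by
    ext x
    simp only [Set.mem_preimage, Set.mem_pi, Set.mem_univ, forall_true_left, Function.eval]
    constructor
    · intro hx j
      rcases eq_or_ne j i with rfl | hj
      · simpa using hx
      · simp [Function.update_of_ne hj]
    · intro hx
      have := hx i
      simpa using this
  rw [hpre, Measure.pi_pi]
  rw [Fintype.prod_eq_single i (fun j hj => by simp [Function.update_of_ne hj])]
  simp

lemma integrable_sq_gaussian : Integrable (fun x : ℝ => x^2) (gaussianReal 0 1) := by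
  rw [gaussianReal_of_var_ne_zero _ one_ne_zero]
  rw [integrable_withDensity_iff_integrable_smul' (measurable_gaussianPDF 0 1)
    (Filter.Eventually.of_forall fun x => ENNReal.ofReal_lt_top)]
  have heq : (fun x : ℝ => (gaussianPDF 0 1 x).toReal • x^2)
      = fun x : ℝ => gaussianPDFReal 0 1 x * x^2 := by
    ext x
    rw [gaussianPDF, ENNReal.toReal_ofReal (gaussianPDFReal_nonneg 0 1 x), smul_eq_mul]
  rw [heq]
  refine Integrable.mono'
    (g := fun x : ℝ => (Real.sqrt (2*Real.pi))⁻¹ * 4 * Real.exp (-(1/4) * x^2)) ?_ ?_ ?_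
  · exact (integrable_exp_neg_mul_sq (by norm_num : (0:ℝ) < 1/4)).const_mul _
  · exact ((measurable_gaussianPDFReal 0 1).mul (measurable_id.pow_const 2)).aestronglyMeasurable
  · refine Filter.Eventually.of_forall fun x => ?_
    have hpdf : gaussianPDFReal 0 1 x = (Real.sqrt (2*Real.pi))⁻¹ * Real.exp (-(x^2)/2) := by
      simp [gaussianPDFReal]
    have hnn : 0 ≤ gaussianPDFReal 0 1 x * x^2 := by
      have := gaussianPDFReal_nonneg 0 1 x
      positivity
    rw [Real.norm_eq_abs, abs_of_nonneg hnn, hpdf]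
    have hsqrt : (0:ℝ) ≤ (Real.sqrt (2*Real.pi))⁻¹ := by positivity
    have hcentral : Real.exp (-x^2/2) * x^2 ≤ 4 * Real.exp (-(1/4)*x^2) := by
      have hsplit : Real.exp (-x^2/2) = Real.exp (-(1/4)*x^2) * Real.exp (-(1/4)*x^2) := by
        rw [← Real.exp_add]; ring_nf
      rw [hsplit]
      have h1 : x^2/4 ≤ Real.exp ((1/4)*x^2) := by
        have := Real.add_one_le_exp ((1/4)*x^2)
        nlinarith [sq_nonneg x]
      have h2 : Real.exp (-(1/4)*x^2) * Real.exp ((1/4)*x^2) = 1 := by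
        rw [← Real.exp_add]; ring_nf; exact Real.exp_zero
      have h3 := Real.exp_pos (-(1/4)*x^2)
      have h4 := Real.exp_pos ((1/4)*x^2)
      nlinarith [h1, h2, h3, h4]
    show (Real.sqrt (2*Real.pi))⁻¹ * Real.exp (-x^2/2) * x^2
      ≤ (Real.sqrt (2*Real.pi))⁻¹ * 4 * Real.exp (-(1/4)*x^2)
    nlinarith [hcentral, hsqrt]

instance isProbability_stdGaussian (n : ℕ) : IsProbabilityMeasure (stdGaussian n) :=
  Measure.isProbabilityMeasure_map
    ((EuclideanSpace.equiv (Fin n) ℝ).symm.continuous.measurable.aemeasurable)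

lemma integrable_normsq_stdGaussian (n : ℕ) :
    Integrable (fun w : EuclideanSpace ℝ (Fin n) => ‖w‖^2) (stdGaussian n) := by
  rw [_root_.stdGaussian,
    integrable_map_measure (g := fun w : EuclideanSpace ℝ (Fin n) => ‖w‖^2)
      ((continuous_norm.pow 2).aestronglyMeasurable)
      ((EuclideanSpace.equiv (Fin n) ℝ).symm.continuous.measurable.aemeasurable)]
  have heq : ((fun w : EuclideanSpace ℝ (Fin n) => ‖w‖^2) ∘
      ⇑(EuclideanSpace.equiv (Fin n) ℝ).symm) = fun x : Fin n → ℝ => ∑ i, (x i)^2 := by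
    ext x
    simp only [Function.comp_apply]
    rw [EuclideanSpace.norm_eq, Real.sq_sqrt (by positivity)]
    congr 1
    ext i
    simp [Real.norm_eq_abs, sq_abs]
  rw [heq]
  apply integrable_finset_sum
  intro i _
  have hcomp : (fun x : Fin n → ℝ => (x i)^2) = (fun r : ℝ => r^2) ∘ (Function.eval i) := rfl
  rw [hcomp]
  refine (integrable_map_measure
    (by rw [map_eval_pi]; exact (measurable_id.pow_const 2).aestronglyMeasurable)
    (measurable_pi_apply i).aemeasurable).1 ?_
  rw [map_eval_pi]
  exact integrable_sq_gaussian

lemma integrable_infDistSq {n : ℕ} {K : Set (EuclideanSpace ℝ (Fin n))} (hK : K.Nonempty) :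
    Integrable (fun w => infDist w K ^ 2) (stdGaussian n) := by
  obtain ⟨u₀, hu₀⟩ := hK
  refine Integrable.mono'
    (g := fun w => 2*‖w‖^2 + 2*‖u₀‖^2) ?_ ?_ ?_
  · exact ((integrable_normsq_stdGaussian n).const_mul 2).add (integrable_const _)
  · exact (((continuous_infDist_pt K).pow 2)).aestronglyMeasurable
  · refine Filter.Eventually.of_forall fun w => ?_
    have h1 : infDist w K ≤ dist w u₀ := infDist_le_dist_of_mem hu₀
    have h2 : (0:ℝ) ≤ infDist w K := infDist_nonneg
    have h3 : dist w u₀ ≤ ‖w‖ + ‖u₀‖ := by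
      rw [dist_eq_norm]
      exact (norm_sub_le _ _)
    rw [Real.norm_eq_abs, abs_of_nonneg (by positivity)]
    show infDist w K ^ 2 ≤ 2 * ‖w‖ ^ 2 + 2 * ‖u₀‖ ^ 2
    nlinarith [norm_nonneg w, norm_nonneg u₀, dist_nonneg (x := w) (y := u₀), sq_nonneg (‖w‖ - ‖u₀‖)]

end AuxG

namespace Aux3
variable {E : Type*} [NormedAddCommGroup E] [InnerProductSpace ℝ E]

lemma subdiff_convex (f : E → ℝ) (x₀ : E) : Convex ℝ (subdiff f x₀) := by
  intro s₁ hs₁ s₂ hs₂ a b ha hb hab x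
  have h1 := hs₁ x
  have h2 := hs₂ x
  have hin : ⟪a • s₁ + b • s₂, x - x₀⟫ = a * ⟪s₁, x - x₀⟫ + b * ⟪s₂, x - x₀⟫ := by
    simp [inner_add_left, real_inner_smul_left]
  rw [hin]
  have h3 : a * f x + b * f x = f x := by rw [← add_mul, hab, one_mul]
  have h4 : a * f x₀ + b * f x₀ = f x₀ := by rw [← add_mul, hab, one_mul]
  linarith [mul_le_mul_of_nonneg_left h1 ha, mul_le_mul_of_nonneg_left h2 hb]

lemma subdiff_isClosed (f : E → ℝ) (x₀ : E) : IsClosed (subdiff f x₀) := by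
  have hrw : subdiff f x₀ = ⋂ x, {s : E | f x₀ + ⟪s, x - x₀⟫ ≤ f x} := by
    ext s; simp [subdiff, Set.mem_iInter]
  rw [hrw]
  refine isClosed_iInter fun x => ?_
  exact isClosed_le (continuous_const.add (continuous_id.inner continuous_const))
    continuous_const

lemma exists_proj [CompleteSpace E] {K : Set E} (hne : K.Nonempty) (hconv : Convex ℝ K)
    (hclosed : IsClosed K) (w : E) :
    ∃ u ∈ K, ‖w - u‖ = infDist w K ∧ ∀ v ∈ K, ⟪w - u, v - u⟫ ≤ 0 := by
  obtain ⟨u, huK, hnorm⟩ :=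
    exists_norm_eq_iInf_of_complete_convex hne hclosed.isComplete hconv w
  have hinf : (⨅ v : K, ‖w - v‖) = infDist w K := by
    rw [infDist_eq_iInf]
    congr 1
    ext v
    rw [dist_eq_norm]
  have hchar := (norm_eq_iInf_iff_real_inner_le_zero hconv huK).1 hnorm
  exact ⟨u, huK, by rw [hnorm, hinf], hchar⟩

end Aux3

end

/-- Worst case NMSE of proximal denoising.
For convex `f`, `λ ≥ 0` and standard Gaussian noise, the supremum over `σ > 0` of the
normalized MSE of the proximity operator equals `D(λ ∂f(x₀))`, and it is attained in the
limit `σ → 0`. -/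
theorem statement0 {n : ℕ} (f : EuclideanSpace ℝ (Fin n) → ℝ)
    (hf : ConvexOn ℝ Set.univ f) (x₀ : EuclideanSpace ℝ (Fin n))
    (lam : ℝ) (hlam : 0 ≤ lam)
    (prox : ℝ → EuclideanSpace ℝ (Fin n) → EuclideanSpace ℝ (Fin n))
    (hprox : ∀ σ : ℝ, 0 < σ → ∀ w,
      IsMinOn (fun x => (1 / 2) * ‖(x₀ + σ • w) - x‖ ^ 2 + σ * lam * f x)
        Set.univ (prox σ w)) :
    IsLUB {e : ℝ | ∃ σ : ℝ, 0 < σ ∧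
        e = (∫ w, ‖prox σ w - x₀‖ ^ 2 ∂(stdGaussian n)) / σ ^ 2}
      (msd n (lam • subdiff f x₀)) ∧
    Tendsto (fun σ : ℝ => (∫ w, ‖prox σ w - x₀‖ ^ 2 ∂(stdGaussian n)) / σ ^ 2)
      (nhdsWithin 0 (Set.Ioi 0)) (nhds (msd n (lam • subdiff f x₀))) := by
  classical
  set K : Set (EuclideanSpace ℝ (Fin n)) := lam • subdiff f x₀ with hKdef
  obtain ⟨s₀, hs₀, -⟩ := Aux.exists_subgradient hf x₀ 0
  have hKne : K.Nonempty := ⟨lam • s₀, Set.smul_mem_smul_set hs₀⟩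
  have hKconv : Convex ℝ K := (Aux3.subdiff_convex f x₀).smul _
  have hKclosed : IsClosed K := by
    rcases eq_or_ne lam 0 with rfl | hlam0
    · have h0 : (0:ℝ) • subdiff f x₀ = 0 := Set.zero_smul_set ⟨s₀, hs₀⟩
      rw [hKdef, h0]
      exact isClosed_singleton
    · exact (Aux3.subdiff_isClosed f x₀).smul_of_ne_zero hlam0
  -- pointwise bound
  have hbound : ∀ σ : ℝ, 0 < σ → ∀ w, ‖prox σ w - x₀‖ ≤ σ * infDist w K := by
    intro σ hσ w
    haveI : Nonempty K := hKne.to_subtype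
    have h1 : ∀ m ∈ K, ‖prox σ w - x₀‖ ≤ σ * dist w m := by
      rintro m ⟨sv, hsv, rfl⟩
      rw [dist_eq_norm]
      exact Aux2.key_ineq1 hf hlam hσ hsv (hprox σ hσ w)
    have h2 : ‖prox σ w - x₀‖ / σ ≤ infDist w K := by
      rw [infDist_eq_iInf]
      refine le_ciInf fun v => ?_
      rw [div_le_iff₀ hσ]
      calc ‖prox σ w - x₀‖ ≤ σ * dist w v := h1 v v.2
        _ = dist w ↑v * σ := mul_comm _ _
    calc ‖prox σ w - x₀‖ = (‖prox σ w - x₀‖ / σ) * σ := by field_simp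
      _ ≤ infDist w K * σ := mul_le_mul_of_nonneg_right h2 hσ.le
      _ = σ * infDist w K := mul_comm _ _
  set F : ℝ → EuclideanSpace ℝ (Fin n) → ℝ :=
    fun σ w => ‖σ⁻¹ • (prox σ w - x₀)‖^2 with hFdef
  have hFle : ∀ σ : ℝ, 0 < σ → ∀ w, F σ w ≤ infDist w K ^ 2 := by
    intro σ hσ w
    have h1 : ‖σ⁻¹ • (prox σ w - x₀)‖ ≤ infDist w K := by
      rw [norm_smul, Real.norm_eq_abs, abs_of_pos (inv_pos.2 hσ)]
      rw [inv_mul_le_iff₀ hσ]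
      exact hbound σ hσ w
    calc F σ w = ‖σ⁻¹ • (prox σ w - x₀)‖^2 := rfl
      _ ≤ infDist w K ^ 2 := by
          have h0 : (0:ℝ) ≤ ‖σ⁻¹ • (prox σ w - x₀)‖ := norm_nonneg _
          nlinarith [h1, h0]
  have hFcont : ∀ σ : ℝ, 0 < σ → Continuous (F σ) := by
    intro σ hσ
    have hlip : LipschitzWith (Real.toNNReal σ) (fun w => prox σ w) := by
      apply LipschitzWith.of_dist_le_mul
      intro w₁ w₂
      rw [dist_eq_norm, dist_eq_norm]
      calc ‖prox σ w₁ - prox σ w₂‖ ≤ σ * ‖w₁ - w₂‖ :=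
            Aux2.prox_lipschitz hf hlam hσ (hprox σ hσ w₁) (hprox σ hσ w₂)
        _ = (Real.toNNReal σ : ℝ) * ‖w₁ - w₂‖ := by
            rw [Real.coe_toNNReal _ hσ.le]
    exact (((hlip.continuous.sub continuous_const).const_smul σ⁻¹).norm.pow 2)
  have hInt : Integrable (fun w => infDist w K ^ 2) (stdGaussian n) :=
    AuxG.integrable_infDistSq hKne
  have hFint : ∀ σ : ℝ, 0 < σ → Integrable (F σ) (stdGaussian n) := by
    intro σ hσ
    refine Integrable.mono' hInt ((hFcont σ hσ).aestronglyMeasurable) ?_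
    refine Filter.Eventually.of_forall fun w => ?_
    rw [Real.norm_eq_abs, abs_of_nonneg (by positivity)]
    exact hFle σ hσ w
  -- tendsto pointwise
  have hFtendsto : ∀ w, Tendsto (fun σ => F σ w) (𝓝[>] (0:ℝ)) (𝓝 (infDist w K ^ 2)) := by
    intro w
    obtain ⟨ustar, hustarK, hnormu, hchar⟩ := Aux3.exists_proj hKne hKconv hKclosed w
    obtain ⟨sstar, hsstar, hustar0⟩ := hustarK
    have hustar : lam • sstar = ustar := hustar0
    set estar := w - ustar with hestar
    obtain ⟨shat, hshat, hshat2⟩ := Aux.exists_subgradient hf x₀ estar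
    have hup : ∀ σ : ℝ, 0 < σ → ‖estar - σ⁻¹ • (prox σ w - x₀)‖^2
        ≤ 2*(lam * Aux.slopeQ f x₀ estar σ - ⟪ustar, estar⟫) := by
      intro σ hσ
      have h2 := Aux2.key_ineq2 hf hlam hσ hsstar (hprox σ hσ w)
      have hes : w - lam • sstar = estar := by rw [hestar, hustar]
      rw [hes, hustar] at h2
      have hsc : ‖σ • estar - (prox σ w - x₀)‖^2
          = σ^2 * ‖estar - σ⁻¹ • (prox σ w - x₀)‖^2 := by
        have hv : σ • (estar - σ⁻¹ • (prox σ w - x₀)) = σ • estar - (prox σ w - x₀) := by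
          rw [smul_sub, smul_inv_smul₀ hσ.ne']
        rw [← hv]
        simp only [norm_smul, Real.norm_eq_abs, mul_pow, sq_abs]
      have hsl : σ * lam * (f (x₀ + σ • estar) - f x₀)
          = σ^2 * (lam * Aux.slopeQ f x₀ estar σ) := by
        rw [Aux.slopeQ]
        field_simp
      rw [hsc, hsl] at h2
      have hσ2 : (0:ℝ) < σ^2 := by positivity
      nlinarith [h2, hσ2]
    have hlow : ∀ σ : ℝ, 0 < σ → ⟪ustar, estar⟫ ≤ lam * Aux.slopeQ f x₀ estar σ := by
      intro σ hσ
      have h5 := Aux.subdiff_le_slopeQ hsstar (d := estar) hσ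
      have h6 := mul_le_mul_of_nonneg_left h5 hlam
      have h7 : ⟪ustar, estar⟫ = lam * ⟪sstar, estar⟫ := by
        rw [← hustar, real_inner_smul_left]
      linarith [h6, h7.le, h7.ge]
    have hlimslope : Tendsto (fun σ => lam * Aux.slopeQ f x₀ estar σ) (𝓝[>] (0:ℝ))
        (𝓝 (lam * Aux.dirDeriv f x₀ estar)) :=
      (Aux.tendsto_slopeQ hf estar).const_mul lam
    have hDD : lam * Aux.dirDeriv f x₀ estar ≤ ⟪ustar, estar⟫ := by
      have h5 := hchar (lam • shat) (Set.smul_mem_smul_set hshat)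
      rw [inner_sub_right] at h5
      have h8 : ⟪estar, lam • shat⟫ = lam * ⟪shat, estar⟫ := by
        rw [real_inner_comm, real_inner_smul_left]
      have h9 : ⟪estar, ustar⟫ = ⟪ustar, estar⟫ := real_inner_comm _ _
      rw [← hshat2]
      linarith [h5, h8.le, h8.ge, h9.le, h9.ge]
    have hDD2 : ⟪ustar, estar⟫ ≤ lam * Aux.dirDeriv f x₀ estar := by
      refine ge_of_tendsto hlimslope ?_
      filter_upwards [self_mem_nhdsWithin] with σ hσ
      exact hlow σ hσ
    have hDDeq : lam * Aux.dirDeriv f x₀ estar = ⟪ustar, estar⟫ := le_antisymm hDD hDD2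
    have hsq : Tendsto (fun σ : ℝ => ‖estar - σ⁻¹ • (prox σ w - x₀)‖^2) (𝓝[>] (0:ℝ))
        (𝓝 0) := by
      have hub : Tendsto (fun σ => 2*(lam * Aux.slopeQ f x₀ estar σ - ⟪ustar, estar⟫))
          (𝓝[>] (0:ℝ)) (𝓝 (2*(lam * Aux.dirDeriv f x₀ estar - ⟪ustar, estar⟫))) :=
        ((hlimslope.sub_const _).const_mul 2)
      rw [hDDeq, sub_self, mul_zero] at hub
      refine squeeze_zero' ?_ ?_ hub
      · exact Filter.Eventually.of_forall fun σ => sq_nonneg _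
      · filter_upwards [self_mem_nhdsWithin] with σ hσ
        exact hup σ hσ
    have hnormt : Tendsto (fun σ : ℝ => ‖estar - σ⁻¹ • (prox σ w - x₀)‖) (𝓝[>] (0:ℝ))
        (𝓝 0) := by
      have hc := (Real.continuous_sqrt.tendsto 0).comp hsq
      simp only [Function.comp_def, Real.sqrt_zero] at hc
      refine hc.congr fun σ => ?_
      rw [Real.sqrt_sq (norm_nonneg _)]
    have hE : Tendsto (fun σ : ℝ => σ⁻¹ • (prox σ w - x₀)) (𝓝[>] (0:ℝ)) (𝓝 estar) := by
      rw [tendsto_iff_norm_sub_tendsto_zero]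
      refine hnormt.congr fun σ => ?_
      rw [norm_sub_rev]
    have h7 : Tendsto (fun σ : ℝ => ‖σ⁻¹ • (prox σ w - x₀)‖^2) (𝓝[>] (0:ℝ))
        (𝓝 (‖estar‖^2)) :=
      ((continuous_norm.pow 2).tendsto estar).comp hE
    have h8 : ‖estar‖^2 = infDist w K ^ 2 := by rw [hestar, hnormu]
    rw [← h8]
    exact h7
  -- integral equality
  have hIeq : ∀ σ : ℝ, 0 < σ →
      (∫ w, ‖prox σ w - x₀‖^2 ∂(stdGaussian n)) / σ^2 = ∫ w, F σ w ∂(stdGaussian n) := by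
    intro σ hσ
    rw [← integral_div]
    refine integral_congr_ae (Filter.Eventually.of_forall fun w => ?_)
    rw [hFdef]
    simp only []
    rw [norm_smul, Real.norm_eq_abs, abs_of_pos (inv_pos.2 hσ), mul_pow]
    field_simp
  have hTend : Tendsto (fun σ : ℝ => ∫ w, F σ w ∂(stdGaussian n)) (𝓝[>] (0:ℝ))
      (𝓝 (msd n K)) := by
    rw [msd]
    refine tendsto_integral_filter_of_dominated_convergence (fun w => infDist w K ^ 2)
      ?_ ?_ hInt ?_
    · filter_upwards [self_mem_nhdsWithin] with σ hσ
      exact (hFcont σ hσ).aestronglyMeasurable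
    · filter_upwards [self_mem_nhdsWithin] with σ hσ
      refine Filter.Eventually.of_forall fun w => ?_
      rw [Real.norm_eq_abs, abs_of_nonneg (by positivity)]
      exact hFle σ hσ w
    · exact Filter.Eventually.of_forall hFtendsto
  have hTend' : Tendsto (fun σ : ℝ => (∫ w, ‖prox σ w - x₀‖^2 ∂(stdGaussian n)) / σ^2)
      (𝓝[>] (0:ℝ)) (𝓝 (msd n K)) := by
    refine hTend.congr' ?_
    filter_upwards [self_mem_nhdsWithin] with σ hσ
    exact (hIeq σ hσ).symm
  refine ⟨⟨?_, ?_⟩, hTend'⟩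
  · rintro el ⟨σ, hσ, rfl⟩
    rw [hIeq σ hσ, msd]
    exact integral_mono (hFint σ hσ) hInt (fun w => hFle σ hσ w)
  · intro b hb
    refine le_of_tendsto hTend' ?_
    filter_upwards [self_mem_nhdsWithin] with σ hσ
    exact hb ⟨σ, hσ, rfl⟩
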